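/- Counterexample to the analogue of Theorem B for G_2: Let P = Conv{(1,0,-1), (0,-1,1)} ⊂ {x ∈ R^3 : Σxi = 0}, a segment. Then P ∩ Z^3 = {(1,0,-1),(0,-1,1)} has exactly 2 elements, while the set p_α(P) ∩ p_α({x ∈ Z^3 : Σxi = 0}), where p_α(a,b,c) = ((a+b)/2,(a+b)/2,c) for α = (1,-1,0), equals {(1/2,1/2,-1), (0,0,0), (-1/2,-1/2,1)} and has exactly 3 elements. In particular p_α(P ∩ Z^3) ⊊ p_α(P) ∩ p_α({x ∈ Z^3 : Σxi = 0}). -/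

import Mathlib

/-- counterexample to the analogue of Theorem B for G₂.  For the
segment P = Conv{(1,0,-1),(0,-1,1)}: its lattice points are exactly the two
endpoints, while p_α(P) ∩ p_α(L^∨) consists of exactly three points, so
p_α(P ∩ ℤ³) is a strict subset of p_α(P) ∩ p_α(L^∨). -/
theorem stmt_10 (pα : (Fin 3 → ℝ) → (Fin 3 → ℝ))
    (hpα : ∀ x, pα x = ![(x 0 + x 1) / 2, (x 0 + x 1) / 2, x 2])
    (P : Set (Fin 3 → ℝ))
    (hP : P = segment ℝ ![(1 : ℝ), 0, -1] ![(0 : ℝ), -1, 1])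
    (L : Set (Fin 3 → ℝ))
    (hL : L = {x | ∃ z : Fin 3 → ℤ, (∀ i, x i = (z i : ℝ)) ∧ z 0 + z 1 + z 2 = 0}) :
    {x | x ∈ P ∧ ∃ z : Fin 3 → ℤ, ∀ i, x i = (z i : ℝ)} =
      ({![(1 : ℝ), 0, -1], ![(0 : ℝ), -1, 1]} : Set (Fin 3 → ℝ)) ∧
    pα '' P ∩ pα '' L =
      ({![(1 : ℝ) / 2, 1 / 2, -1], ![(0 : ℝ), 0, 0], ![-(1 : ℝ) / 2, -(1 / 2), 1]} :
        Set (Fin 3 → ℝ)) ∧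
    pα '' {x | x ∈ P ∧ ∃ z : Fin 3 → ℤ, ∀ i, x i = (z i : ℝ)} ⊂
      pα '' P ∩ pα '' L := by
  -- parametrization of P
  have key : ∀ t : ℝ, (1 - t) • ![(1:ℝ),0,-1] + t • ![(0:ℝ),-1,1]
      = ![1-t, -t, -1+2*t] := by
    intro t
    funext i
    fin_cases i <;> simp <;> ring
  have hPiff : ∀ x, x ∈ P ↔ ∃ t : ℝ, 0 ≤ t ∧ t ≤ 1 ∧ x = ![1-t, -t, -1+2*t] := by
    intro x
    rw [hP, segment_eq_image]
    constructor
    · rintro ⟨t, ⟨ht0, ht1⟩, rfl⟩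
      exact ⟨t, ht0, ht1, key t⟩
    · rintro ⟨t, ht0, ht1, rfl⟩
      exact ⟨t, ⟨ht0, ht1⟩, key t⟩
  have part1 : {x | x ∈ P ∧ ∃ z : Fin 3 → ℤ, ∀ i, x i = (z i : ℝ)} =
      ({![(1 : ℝ), 0, -1], ![(0 : ℝ), -1, 1]} : Set (Fin 3 → ℝ)) := by
    ext x
    simp only [Set.mem_setOf_eq, Set.mem_insert_iff, Set.mem_singleton_iff]
    constructor
    · rintro ⟨hxP, z, hz⟩
      obtain ⟨t, ht0, ht1, rfl⟩ := (hPiff x).1 hxP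
      have e0 : (1:ℝ) - t = z 0 := by simpa using hz 0
      have hz0 : (0:ℤ) ≤ z 0 := by
        have : (0:ℝ) ≤ (z 0:ℝ) := by rw [← e0]; linarith
        exact_mod_cast this
      have hz1 : z 0 ≤ 1 := by
        have : (z 0:ℝ) ≤ 1 := by rw [← e0]; linarith
        exact_mod_cast this
      have hc : z 0 = 0 ∨ z 0 = 1 := by omega
      rcases hc with h | h
      · right
        have ht : t = 1 := by rw [h] at e0; push_cast at e0; linarith
        subst ht
        funext i; fin_cases i <;> norm_num
      · left
        have ht : t = 0 := by rw [h] at e0; push_cast at e0; linarith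
        subst ht
        funext i; fin_cases i <;> norm_num
    · rintro (rfl | rfl)
      · exact ⟨(hPiff _).2 ⟨0, le_refl _, zero_le_one, by funext i; fin_cases i <;> norm_num⟩,
          ![1,0,-1], by intro i; fin_cases i <;> norm_num⟩
      · exact ⟨(hPiff _).2 ⟨1, zero_le_one, le_refl _, by funext i; fin_cases i <;> norm_num⟩,
          ![0,-1,1], by intro i; fin_cases i <;> norm_num⟩
  have part2 : pα '' P ∩ pα '' L =
      ({![(1 : ℝ) / 2, 1 / 2, -1], ![(0 : ℝ), 0, 0], ![-(1 : ℝ) / 2, -(1 / 2), 1]} :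
        Set (Fin 3 → ℝ)) := by
    ext y
    simp only [Set.mem_inter_iff, Set.mem_image, Set.mem_insert_iff,
      Set.mem_singleton_iff, hL, Set.mem_setOf_eq]
    constructor
    · rintro ⟨⟨x, hxP, rfl⟩, w, ⟨z, hz, hzsum⟩, hw⟩
      obtain ⟨t, ht0, ht1, rfl⟩ := (hPiff x).1 hxP
      -- compare coordinate 2 of pα x and pα w
      have h2 : (-1 + 2*t : ℝ) = (z 2 : ℝ) := by
        have := congrFun hw 2
        rw [hpα, hpα] at this
        simp at this
        rw [← this, hz 2]
      have hb1 : (-1 : ℤ) ≤ z 2 := by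
        have : (-1:ℝ) ≤ (z 2:ℝ) := by rw [← h2]; linarith
        exact_mod_cast this
      have hb2 : z 2 ≤ 1 := by
        have : (z 2:ℝ) ≤ 1 := by rw [← h2]; linarith
        exact_mod_cast this
      have hc : z 2 = -1 ∨ z 2 = 0 ∨ z 2 = 1 := by omega
      rcases hc with h | h | h
      · left
        have ht : t = 0 := by rw [h] at h2; push_cast at h2; linarith
        subst ht
        rw [hpα]; funext i; fin_cases i <;> norm_num [Matrix.cons_val_two]
      · right; left
        have ht : t = 1/2 := by rw [h] at h2; push_cast at h2; linarith
        subst ht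
        rw [hpα]; funext i; fin_cases i <;> norm_num [Matrix.cons_val_two]
      · right; right
        have ht : t = 1 := by rw [h] at h2; push_cast at h2; linarith
        subst ht
        rw [hpα]; funext i; fin_cases i <;> norm_num [Matrix.cons_val_two]
    · rintro (rfl | rfl | rfl)
      · refine ⟨⟨![(1:ℝ),0,-1], (hPiff _).2 ⟨0, le_refl _, zero_le_one,
            by funext i; fin_cases i <;> norm_num⟩, ?_⟩,
          ![(1:ℝ),0,-1], ⟨![1,0,-1], by intro i; fin_cases i <;> norm_num, by norm_num [Matrix.cons_val_two]⟩, ?_⟩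
        · rw [hpα]; funext i; fin_cases i <;> norm_num [Matrix.cons_val_two]
        · rw [hpα]; funext i; fin_cases i <;> norm_num [Matrix.cons_val_two]
      · refine ⟨⟨![(1:ℝ)/2,-(1/2),0], (hPiff _).2 ⟨1/2, by norm_num, by norm_num,
            by funext i; fin_cases i <;> norm_num⟩, ?_⟩,
          ![(0:ℝ),0,0], ⟨![0,0,0], by intro i; fin_cases i <;> norm_num, by norm_num [Matrix.cons_val_two]⟩, ?_⟩
        · rw [hpα]; funext i; fin_cases i <;> norm_num [Matrix.cons_val_two]
        · rw [hpα]; funext i; fin_cases i <;> norm_num [Matrix.cons_val_two]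
      · refine ⟨⟨![(0:ℝ),-1,1], (hPiff _).2 ⟨1, zero_le_one, le_refl _,
            by funext i; fin_cases i <;> norm_num⟩, ?_⟩,
          ![(0:ℝ),-1,1], ⟨![0,-1,1], by intro i; fin_cases i <;> norm_num, by norm_num [Matrix.cons_val_two]⟩, ?_⟩
        · rw [hpα]; funext i; fin_cases i <;> norm_num [Matrix.cons_val_two]
        · rw [hpα]; funext i; fin_cases i <;> norm_num [Matrix.cons_val_two]
  refine ⟨part1, part2, ?_⟩
  rw [part1, part2]
  constructor
  · rintro y ⟨x, (rfl | rfl), rfl⟩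
    · left; rw [hpα]; funext i; fin_cases i <;> norm_num [Matrix.cons_val_two]
    · right; right; rw [hpα]; funext i; fin_cases i <;> norm_num [Matrix.cons_val_two]
  · intro hsub
    have hmem : ![(0:ℝ),0,0] ∈ pα '' ({![(1 : ℝ), 0, -1], ![(0 : ℝ), -1, 1]} : Set (Fin 3 → ℝ)) := by
      apply hsub
      right; left; rfl
    rcases hmem with ⟨x, (rfl | rfl), hx⟩
    · rw [hpα] at hx
      have := congrFun hx 2
      norm_num [Matrix.cons_val_two] at this
    · rw [hpα] at hx
      have := congrFun hx 2
      norm_num [Matrix.cons_val_two] at this
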